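/- Let m and c be positive integers, let D be a positive integer with c ≠ D, let χ be a primitive quadratic Dirichlet character modulo D, and let F be the least common multiple of c and D. Then for every integer α, | ∑_{n=0}^{F−1} χ(n) · S(m, n; c) · e^{2πi n α / F} | ≤ c·√D; moreover this sum is zero whenever gcd(α, F/gcd(c,D)) ≠ 1. -/

import Mathlib

/-- The Kloosterman sum `S(m, n; c) = ∑_{v ∈ (ℤ/cℤ)ˣ} e((m·v + n·v⁻¹)/c)`. -/
noncomputable def klooster (m n c : ℕ) : ℂ :=
  ∑ v ∈ Finset.range c,
    if Nat.Coprime v c then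
      Complex.exp (2 * Real.pi * Complex.I *
        (((m * v + n * (((v : ZMod c))⁻¹.val) : ℕ) : ℂ)) / c)
    else 0

open Complex Finset AddChar


lemma sum_range_eq_sum_zmod {N : ℕ} [NeZero N] (f : ZMod N → ℂ) :
    ∑ n ∈ Finset.range N, f (n : ZMod N) = ∑ x : ZMod N, f x := by
  refine Finset.sum_nbij' (fun n => (n : ZMod N)) (fun x => x.val) ?_ ?_ ?_ ?_ ?_ <;>
    intros <;>
    simp_all [ZMod.val_cast_of_lt, ZMod.natCast_val, ZMod.val_lt, Nat.mod_eq_of_lt, ZMod.cast_id]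

lemma sum_range_mul_split (D k : ℕ) (f : ℕ → ℂ) :
    ∑ n ∈ Finset.range (D * k), f n
      = ∑ p ∈ Finset.range D ×ˢ Finset.range k, f (p.1 + D * p.2) := by
  refine (Finset.sum_nbij' (fun p => p.1 + D * p.2) (fun n => (n % D, n / D)) ?_ ?_ ?_ ?_ ?_).symm
  · intro p hp
    simp only [Finset.mem_range, Finset.mem_product] at *
    obtain ⟨h1, h2⟩ := hp
    calc p.1 + D * p.2 < D + D * p.2 := by omega
    _ = D * (p.2 + 1) := by ring
    _ ≤ D * k := Nat.mul_le_mul_left _ (by omega)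
  · intro n hn
    simp only [Finset.mem_range, Finset.mem_product] at *
    have hD : 0 < D := by
      rcases Nat.eq_zero_or_pos D with h | h
      · simp [h] at hn
      · exact h
    exact ⟨Nat.mod_lt _ hD, (Nat.div_lt_iff_lt_mul hD).2 (by rwa [mul_comm] at hn)⟩
  · intro p hp
    simp only [Finset.mem_range, Finset.mem_product] at hp
    simp [Nat.add_mul_mod_self_left, Nat.mod_eq_of_lt hp.1,
      Nat.add_mul_div_left _ _ (by omega : 0 < D), Nat.div_eq_of_lt hp.1]
  · intro n hn; exact Nat.mod_add_div n D
  · intro n hn; rfl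

lemma tsum_exp (k : ℕ) (hk : 0 < k) (β : ℤ) :
    ∑ t ∈ Finset.range k, Complex.exp (2 * Real.pi * Complex.I * ((t * β : ℤ) : ℂ) / k)
      = if (k : ℤ) ∣ β then (k : ℂ) else 0 := by
  haveI : NeZero k := ⟨hk.ne'⟩
  have h1 : ∀ t : ℕ, Complex.exp (2 * Real.pi * Complex.I * ((t * β : ℤ) : ℂ) / k)
      = ZMod.stdAddChar ((t : ZMod k) * (β : ZMod k)) := by
    intro t
    have : ((t : ZMod k) * (β : ZMod k)) = (((t * β : ℤ) : ZMod k)) := by push_cast; ring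
    rw [this, ZMod.stdAddChar_coe]
  simp_rw [h1]
  rw [sum_range_eq_sum_zmod (fun x => ZMod.stdAddChar (x * (β : ZMod k)))]
  rw [AddChar.sum_mulShift _ (ZMod.isPrimitive_stdAddChar k)]
  have : ((β : ZMod k) = 0) ↔ (k : ℤ) ∣ β := ZMod.intCast_zmod_eq_zero_iff_dvd β k
  split_ifs with h1 h2 h2
  · simp [ZMod.card]
  · exact absurd (this.mp h1) h2
  · exact absurd (this.mpr h2) h1
  · simp

lemma asum_gauss (D : ℕ) [NeZero D] (χ : DirichletCharacter ℂ D) (hprim : χ.IsPrimitive)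
    (γ : ℤ) :
    ∑ a ∈ Finset.range D, χ (a : ZMod D) * Complex.exp (2 * Real.pi * Complex.I * ((a * γ : ℤ) : ℂ) / D)
      = χ⁻¹ ((γ : ℤ) : ZMod D) * gaussSum χ ZMod.stdAddChar := by
  have h1 : ∀ a : ℕ, Complex.exp (2 * Real.pi * Complex.I * ((a * γ : ℤ) : ℂ) / D)
      = (ZMod.stdAddChar.mulShift ((γ : ℤ) : ZMod D)) ((a : ZMod D)) := by
    intro a
    rw [AddChar.mulShift_apply]
    have : ((γ : ℤ) : ZMod D) * (a : ZMod D) = (((a * γ : ℤ) : ZMod D)) := by push_cast; ring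
    rw [this, ZMod.stdAddChar_coe]
  simp_rw [h1]
  rw [sum_range_eq_sum_zmod (fun x => χ x * (ZMod.stdAddChar.mulShift ((γ : ℤ) : ZMod D)) x)]
  exact gaussSum_mulShift_of_isPrimitive _ hprim _

lemma innerNsum (D k : ℕ) [NeZero D] (hk : 0 < k) (χ : DirichletCharacter ℂ D)
    (hprim : χ.IsPrimitive) (β : ℤ) :
    ∑ n ∈ Finset.range (D * k), χ ((n : ℕ) : ZMod D)
        * Complex.exp (2 * Real.pi * Complex.I * ((n * β : ℤ) : ℂ) / ((D * k : ℕ) : ℂ))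
      = if (k : ℤ) ∣ β then
          (k : ℂ) * χ⁻¹ (((β / k : ℤ)) : ZMod D) * gaussSum χ ZMod.stdAddChar
        else 0 := by
  have hD : 0 < D := Nat.pos_of_ne_zero (NeZero.ne D)
  have hDk : ((D * k : ℕ) : ℂ) ≠ 0 := Nat.cast_ne_zero.mpr (Nat.mul_pos hD hk).ne'
  have hkC : (k : ℂ) ≠ 0 := Nat.cast_ne_zero.mpr hk.ne'
  have hDC : (D : ℂ) ≠ 0 := Nat.cast_ne_zero.mpr hD.ne'
  rw [sum_range_mul_split]
  have step : ∀ p : ℕ × ℕ, p ∈ Finset.range D ×ˢ Finset.range k →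
      χ (((p.1 + D * p.2 : ℕ) : ℕ) : ZMod D)
        * Complex.exp (2 * Real.pi * Complex.I * (((p.1 + D * p.2 : ℕ) * β : ℤ) : ℂ) / ((D * k : ℕ) : ℂ))
      = (χ ((p.1 : ℕ) : ZMod D)
          * Complex.exp (2 * Real.pi * Complex.I * ((p.1 * β : ℤ) : ℂ) / ((D * k : ℕ) : ℂ)))
        * Complex.exp (2 * Real.pi * Complex.I * ((p.2 * β : ℤ) : ℂ) / (k : ℂ)) := by
    intro p _
    have hχ : (((p.1 + D * p.2 : ℕ) : ℕ) : ZMod D) = ((p.1 : ℕ) : ZMod D) := by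
      push_cast
      simp [ZMod.natCast_self]
    rw [hχ]
    have harg : (2 * Real.pi * Complex.I * (((p.1 + D * p.2 : ℕ) * β : ℤ) : ℂ) / ((D * k : ℕ) : ℂ))
        = 2 * Real.pi * Complex.I * ((p.1 * β : ℤ) : ℂ) / ((D * k : ℕ) : ℂ)
          + 2 * Real.pi * Complex.I * ((p.2 * β : ℤ) : ℂ) / (k : ℂ) := by
      push_cast
      field_simp
    rw [harg, Complex.exp_add]
    ring
  rw [Finset.sum_congr rfl step, Finset.sum_product]
  simp_rw [← Finset.mul_sum]
  rw [← Finset.sum_mul, tsum_exp k hk β]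
  split_ifs with hdvd
  · obtain ⟨γ, hγ⟩ := hdvd
    have hβk : β / (k : ℤ) = γ := by rw [hγ]; exact Int.mul_ediv_cancel_left _ (by exact_mod_cast hk.ne')
    have expeq : ∀ a : ℕ, Complex.exp (2 * Real.pi * Complex.I * ((a * β : ℤ) : ℂ) / ((D * k : ℕ) : ℂ))
        = Complex.exp (2 * Real.pi * Complex.I * ((a * γ : ℤ) : ℂ) / (D : ℂ)) := by
      intro a
      congr 1
      rw [hγ]
      push_cast
      field_simp
    simp_rw [expeq]
    rw [asum_gauss D χ hprim γ, hβk]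
    ring
  · rw [mul_zero]

lemma abs_gauss (D : ℕ) [NeZero D] (χ : DirichletCharacter ℂ D) (hχ2 : χ ^ 2 = 1)
    (hprim : χ.IsPrimitive) :
    ‖gaussSum χ ZMod.stdAddChar‖ = Real.sqrt D := by
  set e : AddChar (ZMod D) ℂ := ZMod.stdAddChar with he
  set τ := gaussSum χ e with hτ
  have hinv : χ⁻¹ = χ := inv_eq_of_mul_eq_one_right (by rw [← sq]; exact hχ2)
  have hq : χ.IsQuadratic := by
    intro a
    by_cases h : IsUnit a
    · right
      have h2 : χ a ^ 2 = 1 := by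
        have hh := congrArg (fun ψ : DirichletCharacter ℂ D => ψ a) hχ2
        rw [MulChar.pow_apply' χ (by norm_num) a, MulChar.one_apply h] at hh
        exact hh
      have h3 : χ a * χ a = 1 := by rw [← sq]; exact h2
      exact mul_self_eq_one_iff.mp h3
    · left; exact χ.map_nonunit h
  have hreal : ∀ x : ZMod D, (starRingEnd ℂ) (χ x) = χ x := by
    intro x
    rcases hq x with h | h | h <;> simp [h]
  have hconj_e : ∀ z : ZMod D, (starRingEnd ℂ) (e z) = e (-z) := by
    intro z
    have hz : z = ((z.val : ℤ) : ZMod D) := by simp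
    rw [hz, ← Int.cast_neg, he, ZMod.stdAddChar_coe, ZMod.stdAddChar_coe, ← Complex.exp_conj]
    congr 1
    simp only [map_div₀, map_mul, Complex.conj_I, map_ofNat, Complex.conj_ofReal,
      map_intCast, map_natCast]
    push_cast
    ring
  have hb : ∀ b : ZMod D, ∑ x : ZMod D, χ x * e (b * x) = χ b * τ := by
    intro b
    have h := gaussSum_mulShift_of_isPrimitive e hprim b
    rw [hinv] at h
    rw [← h, gaussSum]
    simp [AddChar.mulShift_apply]
  -- the sum of |χ b|^2
  set Sb : ℝ := ∑ b : ZMod D, Complex.normSq (χ b) with hSb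
  have hSb_pos : 0 < Sb := by
    rw [hSb]
    refine Finset.sum_pos' (fun b _ => Complex.normSq_nonneg _) ⟨1, Finset.mem_univ _, ?_⟩
    simp
  have hSbC : ∑ b : ZMod D, χ b * (starRingEnd ℂ) (χ b) = (Sb : ℂ) := by
    rw [hSb]
    push_cast
    exact Finset.sum_congr rfl fun b _ => Complex.mul_conj _
  have key : (τ * (starRingEnd ℂ) τ) * (Sb : ℂ) = (D : ℂ) * (Sb : ℂ) := by
    rw [← hSbC]
    calc (τ * (starRingEnd ℂ) τ) * ∑ b : ZMod D, χ b * (starRingEnd ℂ) (χ b)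
        = ∑ b : ZMod D, (χ b * τ) * (starRingEnd ℂ) (χ b * τ) := by
          rw [Finset.mul_sum]
          refine Finset.sum_congr rfl fun b _ => ?_
          rw [map_mul]
          ring
      _ = ∑ b : ZMod D, (∑ x : ZMod D, χ x * e (b * x))
            * (starRingEnd ℂ) (∑ x : ZMod D, χ x * e (b * x)) := by
          simp_rw [hb]
      _ = ∑ b : ZMod D, ∑ x : ZMod D, ∑ y : ZMod D, (χ x * χ y) * e (b * (x - y)) := by
          refine Finset.sum_congr rfl fun b _ => ?_
          rw [map_sum, Finset.sum_mul_sum]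
          refine Finset.sum_congr rfl fun x _ => Finset.sum_congr rfl fun y _ => ?_
          rw [map_mul (starRingEnd ℂ), hreal, hconj_e,
            show b * (x - y) = b * x + -(b * y) by ring, AddChar.map_add_eq_mul]
          ring
      _ = ∑ x : ZMod D, ∑ y : ZMod D, (χ x * χ y) * ∑ b : ZMod D, e (b * (x - y)) := by
          rw [Finset.sum_comm]
          refine Finset.sum_congr rfl fun x _ => ?_
          rw [Finset.sum_comm]
          refine Finset.sum_congr rfl fun y _ => ?_
          rw [Finset.mul_sum]
      _ = ∑ x : ZMod D, ∑ y : ZMod D, (χ x * χ y)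
            * (if x - y = 0 then (Fintype.card (ZMod D) : ℂ) else 0) := by
          refine Finset.sum_congr rfl fun x _ => Finset.sum_congr rfl fun y _ => ?_
          rw [AddChar.sum_mulShift _ (by rw [he]; exact ZMod.isPrimitive_stdAddChar D)]
          split_ifs <;> simp
      _ = ∑ x : ZMod D, (χ x * χ x) * (D : ℂ) := by
          refine Finset.sum_congr rfl fun x _ => ?_
          have : ∀ y : ZMod D, (χ x * χ y) * (if x - y = 0 then (Fintype.card (ZMod D) : ℂ) else 0)
              = if y = x then (χ x * χ y) * (D : ℂ) else 0 := by
            intro y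
            by_cases h : y = x
            · simp [h, ZMod.card, sub_eq_zero]
            · have : ¬(x - y = 0) := fun hc => h (by rwa [sub_eq_zero, eq_comm] at hc)
              simp [h, this]
          simp_rw [this]
          rw [Finset.sum_ite_eq' Finset.univ x (fun y => (χ x * χ y) * (D : ℂ))]
          simp
      _ = (D : ℂ) * ∑ b : ZMod D, χ b * (starRingEnd ℂ) (χ b) := by
          rw [Finset.mul_sum]
          refine Finset.sum_congr rfl fun b _ => ?_
          rw [hreal]
          ring
  have hSbC_ne : (Sb : ℂ) ≠ 0 := by
    simpa using hSb_pos.ne'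
  have htt : τ * (starRingEnd ℂ) τ = (D : ℂ) := mul_right_cancel₀ hSbC_ne key
  have hnsq : (Complex.normSq τ : ℝ) = (D : ℝ) := by
    have := htt
    rw [Complex.mul_conj] at this
    exact_mod_cast this
  rw [Complex.norm_def, hnsq]

theorem stmt_11 (m c D : ℕ) (hm : 0 < m) (hc : 0 < c) (hD : 0 < D) (hcD : c ≠ D)
    (χ : DirichletCharacter ℂ D) (hχ : χ ≠ 1) (hχ2 : χ ^ 2 = 1) (hprim : χ.IsPrimitive)
    (α : ℤ) :
    ‖∑ n ∈ Finset.range (Nat.lcm c D), χ (n : ZMod D) * klooster m n c *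
        Complex.exp (2 * Real.pi * Complex.I * (n : ℂ) * (α : ℂ) / (Nat.lcm c D : ℂ))‖ ≤
      c * Real.sqrt D ∧
    (Int.gcd α ((Nat.lcm c D / Nat.gcd c D : ℕ) : ℤ) ≠ 1 →
      ∑ n ∈ Finset.range (Nat.lcm c D), χ (n : ZMod D) * klooster m n c *
          Complex.exp (2 * Real.pi * Complex.I * (n : ℂ) * (α : ℂ) / (Nat.lcm c D : ℂ)) = 0) := by
  haveI : NeZero D := ⟨hD.ne'⟩
  haveI : NeZero c := ⟨hc.ne'⟩
  set g := Nat.gcd c D with hgdef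
  set cg := c / g with hcgdef
  set dg := D / g with hdgdef
  set F := Nat.lcm c D with hFdef
  have hg : 0 < g := Nat.gcd_pos_of_pos_left D hc
  have hgc : g ∣ c := Nat.gcd_dvd_left c D
  have hgD : g ∣ D := Nat.gcd_dvd_right c D
  have hc_eq : g * cg = c := Nat.mul_div_cancel' hgc
  have hD_eq : g * dg = D := Nat.mul_div_cancel' hgD
  have hcg : 0 < cg := Nat.div_pos (Nat.le_of_dvd hc hgc) hg
  have hdg : 0 < dg := Nat.div_pos (Nat.le_of_dvd hD hgD) hg
  have hcop : Nat.Coprime cg dg := Nat.coprime_div_gcd_div_gcd hg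
  have hgmul : g * F = c * D := Nat.gcd_mul_lcm c D
  have hF1 : F = D * cg := by
    apply Nat.eq_of_mul_eq_mul_left hg
    rw [hgmul]
    calc c * D = (g * cg) * D := by rw [hc_eq]
    _ = g * (D * cg) := by ring
  have hF2 : F = c * dg := by
    apply Nat.eq_of_mul_eq_mul_left hg
    rw [hgmul]
    calc c * D = c * (g * dg) := by rw [hD_eq]
    _ = g * (c * dg) := by ring
  have hFg : F / g = cg * dg := by
    have hFeq : F = g * (cg * dg) := by
      apply Nat.eq_of_mul_eq_mul_left hg
      rw [hgmul, ← hc_eq, ← hD_eq]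
      ring
    rw [hFeq, Nat.mul_div_cancel_left _ hg]
  have hF_pos : 0 < F := Nat.pos_of_ne_zero (by rw [hF1]; positivity)
  have hcC : (c : ℂ) ≠ 0 := Nat.cast_ne_zero.mpr hc.ne'
  have hdgC : (dg : ℂ) ≠ 0 := Nat.cast_ne_zero.mpr hdg.ne'
  have hFC : ((D * cg : ℕ) : ℂ) = (c : ℂ) * (dg : ℂ) := by
    rw [← hF1, hF2]; push_cast; ring
  set w : ℕ → ℕ := fun v => ((v : ZMod c)⁻¹).val with hwdef
  set β : ℕ → ℤ := fun v => (w v : ℤ) * dg + α with hβdef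
  set τ := gaussSum χ ZMod.stdAddChar with hτdef
  -- main structural identity
  have hT : ∑ n ∈ Finset.range F, χ (n : ZMod D) * klooster m n c *
        Complex.exp (2 * Real.pi * Complex.I * (n : ℂ) * (α : ℂ) / (F : ℂ))
      = ∑ v ∈ Finset.range c, (if Nat.Coprime v c then
          Complex.exp (2 * Real.pi * Complex.I * ((m * v : ℕ) : ℂ) / (c : ℂ)) *
            (if (cg : ℤ) ∣ β v then
              (cg : ℂ) * χ⁻¹ (((β v / cg : ℤ)) : ZMod D) * τ
             else 0)
        else 0) := by
    have hF2C : (F : ℂ) = (c : ℂ) * (dg : ℂ) := by rw [hF2]; push_cast; ring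
    have h1 : ∀ n : ℕ, χ (n : ZMod D) * klooster m n c *
          Complex.exp (2 * Real.pi * Complex.I * (n : ℂ) * (α : ℂ) / (F : ℂ))
        = ∑ v ∈ Finset.range c, (if Nat.Coprime v c then
            χ (n : ZMod D)
              * Complex.exp (2 * Real.pi * Complex.I * ((m * v + n * w v : ℕ) : ℂ) / (c : ℂ))
              * Complex.exp (2 * Real.pi * Complex.I * (n : ℂ) * (α : ℂ) / (F : ℂ))
          else 0) := by
      intro n
      simp only [klooster, hwdef, Finset.mul_sum, Finset.sum_mul]
      refine Finset.sum_congr rfl fun v _ => ?_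
      split_ifs <;> ring
    rw [Finset.sum_congr rfl (fun n _ => h1 n), Finset.sum_comm]
    refine Finset.sum_congr rfl fun v hv => ?_
    by_cases hcopv : Nat.Coprime v c
    · simp only [if_pos hcopv]
      have hsplit : ∀ n : ℕ, χ (n : ZMod D)
            * Complex.exp (2 * Real.pi * Complex.I * ((m * v + n * w v : ℕ) : ℂ) / (c : ℂ))
            * Complex.exp (2 * Real.pi * Complex.I * (n : ℂ) * (α : ℂ) / (F : ℂ))
          = Complex.exp (2 * Real.pi * Complex.I * ((m * v : ℕ) : ℂ) / (c : ℂ))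
            * (χ (n : ZMod D)
              * Complex.exp (2 * Real.pi * Complex.I * ((n * β v : ℤ) : ℂ) / ((D * cg : ℕ) : ℂ))) := by
        intro n
        have harg : 2 * (Real.pi : ℂ) * Complex.I * ((m * v + n * w v : ℕ) : ℂ) / (c : ℂ)
              + 2 * Real.pi * Complex.I * (n : ℂ) * (α : ℂ) / (F : ℂ)
            = 2 * Real.pi * Complex.I * ((m * v : ℕ) : ℂ) / (c : ℂ)
              + 2 * Real.pi * Complex.I * ((n * β v : ℤ) : ℂ) / ((D * cg : ℕ) : ℂ) := by
          rw [hFC, hF2C]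
          simp only [hβdef]
          push_cast
          field_simp
          ring
        calc χ (n : ZMod D)
              * Complex.exp (2 * Real.pi * Complex.I * ((m * v + n * w v : ℕ) : ℂ) / (c : ℂ))
              * Complex.exp (2 * Real.pi * Complex.I * (n : ℂ) * (α : ℂ) / (F : ℂ))
            = χ (n : ZMod D)
              * Complex.exp (2 * (Real.pi : ℂ) * Complex.I * ((m * v + n * w v : ℕ) : ℂ) / (c : ℂ)
                + 2 * Real.pi * Complex.I * (n : ℂ) * (α : ℂ) / (F : ℂ)) := by
              rw [Complex.exp_add]; ring
          _ = _ := by rw [harg, Complex.exp_add]; ring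
      rw [Finset.sum_congr rfl (fun n _ => hsplit n), ← Finset.mul_sum]
      congr 1
      rw [hF1]
      exact innerNsum D cg hcg χ hprim (β v)
    · simp only [if_neg hcopv]
      exact Finset.sum_const_zero
  constructor
  · rw [hT]
    have habsτ : ‖τ‖ = Real.sqrt D := abs_gauss D χ hχ2 hprim
    have hexp1 : ∀ x : ℕ, ‖Complex.exp (2 * Real.pi * Complex.I * (x : ℂ) / (c : ℂ))‖ = 1 := by
      intro x
      have hrw : 2 * (Real.pi : ℂ) * Complex.I * (x : ℂ) / (c : ℂ)
          = ((2 * Real.pi * x / c : ℝ) : ℂ) * Complex.I := by push_cast; ring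
      rw [hrw, Complex.norm_exp_ofReal_mul_I]
    classical
    set S := (Finset.range c).filter (fun v => Nat.Coprime v c ∧ (cg : ℤ) ∣ β v) with hSdef
    have hScard : S.card ≤ g := by
      have hmaps : ∀ v ∈ S, w v / cg ∈ Finset.range g := by
        intro v hv
        rw [Finset.mem_range]
        refine (Nat.div_lt_iff_lt_mul hcg).2 ?_
        have : w v < c := ZMod.val_lt _
        omega
      have hinj := Finset.card_le_card_of_injOn (fun v => w v / cg) hmaps ?_
      · simpa using hinj
      intro v1 hv1 v2 hv2 heq
      simp only [hSdef, Finset.coe_filter, Set.mem_setOf_eq, Finset.mem_range] at hv1 hv2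
      obtain ⟨hv1r, hcop1, hdvd1⟩ := hv1
      obtain ⟨hv2r, hcop2, hdvd2⟩ := hv2
      have hddvd : (cg : ℤ) ∣ ((w v1 : ℤ) - (w v2 : ℤ)) * (dg : ℤ) := by
        have hsub := dvd_sub hdvd1 hdvd2
        have heq2 : β v1 - β v2 = ((w v1 : ℤ) - (w v2 : ℤ)) * (dg : ℤ) := by
          simp only [hβdef]; ring
        rwa [heq2] at hsub
      have hdvdw : (cg : ℤ) ∣ (w v1 : ℤ) - (w v2 : ℤ) :=
        (Nat.isCoprime_iff_coprime.mpr hcop).dvd_of_dvd_mul_right hddvd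
      have hmod : w v2 ≡ w v1 [MOD cg] := Nat.modEq_iff_dvd.mpr hdvdw
      have hmod' : w v2 % cg = w v1 % cg := hmod
      have heq' : w v1 / cg = w v2 / cg := heq
      have hw_eq : w v1 = w v2 := by
        calc w v1 = cg * (w v1 / cg) + w v1 % cg := (Nat.div_add_mod _ _).symm
        _ = cg * (w v2 / cg) + w v2 % cg := by rw [heq', hmod']
        _ = w v2 := Nat.div_add_mod _ _
      simp only [hwdef] at hw_eq
      have hiv : ((v1 : ZMod c))⁻¹ = ((v2 : ZMod c))⁻¹ := ZMod.val_injective c hw_eq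
      have h1' := ZMod.coe_mul_inv_eq_one v1 hcop1
      have h2' := ZMod.coe_mul_inv_eq_one v2 hcop2
      have hvv : ((v1 : ℕ) : ZMod c) = ((v2 : ℕ) : ZMod c) := by
        calc ((v1 : ℕ) : ZMod c) = (v1 : ZMod c) * ((v2 : ZMod c) * (v2 : ZMod c)⁻¹) := by
              rw [h2', mul_one]
        _ = (v2 : ZMod c) * ((v1 : ZMod c) * (v1 : ZMod c)⁻¹) := by rw [hiv]; ring
        _ = (v2 : ℕ) := by rw [h1', mul_one]
      have hval := congrArg ZMod.val hvv
      rwa [ZMod.val_cast_of_lt hv1r, ZMod.val_cast_of_lt hv2r] at hval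
    have hbound : ∀ v ∈ Finset.range c,
        ‖(if Nat.Coprime v c then
            Complex.exp (2 * Real.pi * Complex.I * ((m * v : ℕ) : ℂ) / (c : ℂ)) *
              (if (cg : ℤ) ∣ β v then
                (cg : ℂ) * χ⁻¹ (((β v / cg : ℤ)) : ZMod D) * τ
               else 0)
          else 0)‖
        ≤ (if Nat.Coprime v c ∧ (cg : ℤ) ∣ β v then (cg : ℝ) * Real.sqrt D else 0) := by
      intro v _
      by_cases h1 : Nat.Coprime v c
      · by_cases h2 : (cg : ℤ) ∣ β v
        · rw [if_pos h1, if_pos h2, if_pos ⟨h1, h2⟩, norm_mul, hexp1, one_mul, norm_mul, norm_mul,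
            Complex.norm_natCast, habsτ]
          have hle : ‖χ⁻¹ (((β v / cg : ℤ)) : ZMod D)‖ ≤ 1 := by
            simpa using DirichletCharacter.norm_le_one χ⁻¹ (((β v / cg : ℤ)) : ZMod D)
          have hcg0 : (0 : ℝ) ≤ (cg : ℝ) := Nat.cast_nonneg _
          have hs0 : (0 : ℝ) ≤ Real.sqrt D := Real.sqrt_nonneg _
          calc (cg : ℝ) * ‖χ⁻¹ (((β v / cg : ℤ)) : ZMod D)‖ * Real.sqrt D
              ≤ (cg : ℝ) * 1 * Real.sqrt D := by
                exact mul_le_mul_of_nonneg_right (mul_le_mul_of_nonneg_left hle hcg0) hs0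
          _ = (cg : ℝ) * Real.sqrt D := by ring
        · rw [if_pos h1, if_neg h2, if_neg (fun hh => h2 hh.2)]
          simp
      · rw [if_neg h1, if_neg (fun hh => h1 hh.1)]
        simp
    calc ‖∑ v ∈ Finset.range c, (if Nat.Coprime v c then
            Complex.exp (2 * Real.pi * Complex.I * ((m * v : ℕ) : ℂ) / (c : ℂ)) *
              (if (cg : ℤ) ∣ β v then
                (cg : ℂ) * χ⁻¹ (((β v / cg : ℤ)) : ZMod D) * τ
               else 0)
          else 0)‖
        ≤ ∑ v ∈ Finset.range c, ‖(if Nat.Coprime v c then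
            Complex.exp (2 * Real.pi * Complex.I * ((m * v : ℕ) : ℂ) / (c : ℂ)) *
              (if (cg : ℤ) ∣ β v then
                (cg : ℂ) * χ⁻¹ (((β v / cg : ℤ)) : ZMod D) * τ
               else 0)
          else 0)‖ := norm_sum_le _ _
      _ ≤ ∑ v ∈ Finset.range c,
          (if Nat.Coprime v c ∧ (cg : ℤ) ∣ β v then (cg : ℝ) * Real.sqrt D else 0) :=
          Finset.sum_le_sum hbound
      _ = (S.card : ℝ) * ((cg : ℝ) * Real.sqrt D) := by
          rw [← Finset.sum_filter, Finset.sum_const, nsmul_eq_mul]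
      _ ≤ (g : ℝ) * ((cg : ℝ) * Real.sqrt D) := by
          refine mul_le_mul_of_nonneg_right ?_ (by positivity)
          exact_mod_cast hScard
      _ = (c : ℝ) * Real.sqrt D := by
          rw [← hc_eq]; push_cast; ring
  · rw [hT]
    intro hα
    refine Finset.sum_eq_zero fun v hv => ?_
    by_cases hcopv : Nat.Coprime v c
    · rw [if_pos hcopv]
      by_cases hdvd : (cg : ℤ) ∣ β v
      · rw [if_pos hdvd]
        have hχ0 : χ⁻¹ (((β v / cg : ℤ)) : ZMod D) = 0 := by
          by_contra hne
          have hu : IsUnit (((β v / cg : ℤ)) : ZMod D) := by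
            by_contra h; exact hne (MulChar.map_nonunit _ h)
          set γ : ℤ := β v / cg with hγdef
          obtain ⟨b, hb⟩ := hu.exists_right_inv
          have hDdvd : (D : ℤ) ∣ γ * (b.val : ℤ) - 1 := by
            rw [← ZMod.intCast_zmod_eq_zero_iff_dvd]
            push_cast
            rw [ZMod.natCast_val, ZMod.cast_id]
            rw [hb]
            ring
          obtain ⟨s, hs⟩ := hDdvd
          have hcopγD : IsCoprime γ (D : ℤ) := ⟨(b.val : ℤ), -s, by linarith⟩
          have hdgdvdD : ((dg : ℕ) : ℤ) ∣ ((D : ℕ) : ℤ) :=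
            Int.natCast_dvd_natCast.mpr ⟨g, by rw [← hD_eq]; ring⟩
          have hcopγdg : IsCoprime γ ((dg : ℕ) : ℤ) :=
            hcopγD.of_isCoprime_of_dvd_right hdgdvdD
          have hβeq : (cg : ℤ) * γ = β v := Int.mul_ediv_cancel' hdvd
          have hβeq' : (cg : ℤ) * γ = (w v : ℤ) * dg + α := by
            rw [hβeq]
          have hwcop : Nat.Coprime (w v) c := by
            have h1' := ZMod.coe_mul_inv_eq_one v hcopv
            have hiu : IsUnit ((v : ZMod c)⁻¹) :=
              IsUnit.of_mul_eq_one _ (by rw [mul_comm]; exact h1')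
            have hcw := ZMod.val_coe_unit_coprime hiu.unit
            rw [hiu.unit_spec] at hcw
            exact hcw
          have hcgdvdc : cg ∣ c := ⟨g, by rw [← hc_eq]; ring⟩
          have hwcg : IsCoprime ((w v : ℕ) : ℤ) ((cg : ℕ) : ℤ) :=
            Nat.isCoprime_iff_coprime.mpr (Nat.Coprime.coprime_dvd_right hcgdvdc hwcop)
          have hdgcg : IsCoprime ((dg : ℕ) : ℤ) ((cg : ℕ) : ℤ) :=
            Nat.isCoprime_iff_coprime.mpr hcop.symm
          have hcgdg : IsCoprime ((cg : ℕ) : ℤ) ((dg : ℕ) : ℤ) :=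
            Nat.isCoprime_iff_coprime.mpr hcop
          have hacg : IsCoprime α ((cg : ℕ) : ℤ) := by
            have h := ((hwcg.mul_left hdgcg).neg_left).add_mul_left_left γ
            have heqa : -((w v : ℤ) * (dg : ℤ)) + (cg : ℤ) * γ = α := by linarith
            rwa [heqa] at h
          have hadg : IsCoprime α ((dg : ℕ) : ℤ) := by
            have h := (hcgdg.mul_left hcopγdg).add_mul_left_left (-(w v : ℤ))
            have heqa : (cg : ℤ) * γ + (dg : ℤ) * (-(w v : ℤ)) = α := by linarith
            rwa [heqa] at h
          have hall : IsCoprime α (((cg : ℕ) : ℤ) * ((dg : ℕ) : ℤ)) := hacg.mul_right hadg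
          have hgcd : Int.gcd α ((F / g : ℕ) : ℤ) = 1 := by
            rw [hFg]
            push_cast
            exact Int.isCoprime_iff_gcd_eq_one.mp hall
          exact hα hgcd
        rw [hχ0]
        simp
      · rw [if_neg hdvd]
        simp
    · rw [if_neg hcopv]
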